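/- Let n ≥ 3 and 1 ≤ k ≤ n−2 be integers and let c : ℝⁿ → ℝ² be the index-k cusp map. The image of the critical set of c under c equals the cuspidal cubic {(s,u) ∈ ℝ² : u² = 4s³}, and the restriction of c to its critical set is injective. -/

import Mathlib

open ContinuousLinearMap Finset

section aux2
variable (n k : ℕ)

noncomputable def pr (i : Fin n) : (Fin n → ℝ) →L[ℝ] ℝ := proj i
@[simp] lemma pr_apply (i : Fin n) (v : Fin n → ℝ) : pr n i v = v i := rfl

noncomputable def dd (x : Fin n → ℝ) (i : Fin n) : ℝ :=
  if (i : ℕ) ≤ 1 then 0 else if (i : ℕ) ≤ k + 1 then -(2 * x i) else 2 * x i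

noncomputable def L (hn : 3 ≤ n) (x : Fin n → ℝ) : (Fin n → ℝ) →L[ℝ] ℝ × ℝ :=
  (pr n ⟨0, by omega⟩).prod
    ((3 * (x ⟨1, by omega⟩) ^ 2) • pr n ⟨1, by omega⟩
      - (3 : ℝ) • (x ⟨0, by omega⟩ • pr n ⟨1, by omega⟩
          + x ⟨1, by omega⟩ • pr n ⟨0, by omega⟩)
      + ∑ i : Fin n, dd n k x i • pr n i)

lemma Lap (hn : 3 ≤ n) (x v : Fin n → ℝ) :
    L n k hn x v = (v ⟨0, by omega⟩,
      3 * (x ⟨1, by omega⟩) ^ 2 * v ⟨1, by omega⟩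
        - 3 * (x ⟨0, by omega⟩ * v ⟨1, by omega⟩ + x ⟨1, by omega⟩ * v ⟨0, by omega⟩)
        + ∑ i : Fin n, dd n k x i * v i) := by
  simp [L, Prod.ext_iff, ContinuousLinearMap.sum_apply, smul_eq_mul]
  ring

lemma surj_iff (hn : 3 ≤ n) (x : Fin n → ℝ) :
    ¬ Function.Surjective (L n k hn x) ↔
      (x ⟨0, by omega⟩ = (x ⟨1, by omega⟩) ^ 2 ∧ ∀ j : Fin n, 2 ≤ (j : ℕ) → x j = 0) := by
  constructor
  · intro hns
    by_contra hcond
    apply hns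
    push_neg at hcond
    rcases eq_or_ne (x ⟨0, by omega⟩) ((x ⟨1, by omega⟩) ^ 2) with h0 | h0
    · -- some j ≥ 2 with x j ≠ 0
      obtain ⟨j, hj2, hj⟩ := hcond h0
      have hj1 : (j : ℕ) ≠ 1 := by omega
      have hj0 : (j : ℕ) ≠ 0 := by omega
      have hb : dd n k x j ≠ 0 := by
        unfold dd
        split_ifs with h1 h2 <;> first | omega | simpa
      rintro ⟨s, u⟩
      refine ⟨fun i => if (i : ℕ) = 0 then s else if i = j then
        (u + 3 * x ⟨1, by omega⟩ * s) / dd n k x j else 0, ?_⟩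
      rw [Lap]
      have hv0 : (if ((⟨0, by omega⟩ : Fin n) : ℕ) = 0 then s else if (⟨0, by omega⟩ : Fin n) = j then
          (u + 3 * x ⟨1, by omega⟩ * s) / dd n k x j else 0) = s := by simp
      have hv1 : (if ((⟨1, by omega⟩ : Fin n) : ℕ) = 0 then s else if (⟨1, by omega⟩ : Fin n) = j then
          (u + 3 * x ⟨1, by omega⟩ * s) / dd n k x j else 0) = 0 := by
        rw [if_neg (by simp), if_neg (by simp [Fin.ext_iff]; omega)]
      have hsum : ∑ i : Fin n, dd n k x i *
          (if (i : ℕ) = 0 then s else if i = j then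
            (u + 3 * x ⟨1, by omega⟩ * s) / dd n k x j else 0)
          = u + 3 * x ⟨1, by omega⟩ * s := by
        rw [Finset.sum_eq_single j]
        · rw [if_neg (by omega), if_pos rfl, mul_div_cancel₀ _ hb]
        · intro i _ hij
          rcases le_or_gt (i : ℕ) 1 with h | h
          · simp [dd, h]
          · rw [if_neg (by omega), if_neg hij, mul_zero]
        · simp
      rw [hv0, hv1, hsum]
      simp; ring
    · -- b = 3 x1^2 - 3 x0 ≠ 0
      have hb : 3 * (x ⟨1, by omega⟩) ^ 2 - 3 * x ⟨0, by omega⟩ ≠ 0 := by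
        intro h; apply h0; linarith
      rintro ⟨s, u⟩
      refine ⟨fun i => if (i : ℕ) = 0 then s else if (i : ℕ) = 1 then
        (u + 3 * x ⟨1, by omega⟩ * s) / (3 * (x ⟨1, by omega⟩) ^ 2 - 3 * x ⟨0, by omega⟩)
        else 0, ?_⟩
      rw [Lap]
      have hsum : ∑ i : Fin n, dd n k x i *
          (if (i : ℕ) = 0 then s else if (i : ℕ) = 1 then
            (u + 3 * x ⟨1, by omega⟩ * s) / (3 * (x ⟨1, by omega⟩) ^ 2 - 3 * x ⟨0, by omega⟩)
            else 0) = 0 := by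
        apply Finset.sum_eq_zero
        intro i _
        rcases le_or_gt (i : ℕ) 1 with h | h
        · simp [dd, h]
        · rw [if_neg (by omega), if_neg (by omega), mul_zero]
      rw [hsum]
      simp
      field_simp
      ring
  · rintro ⟨h0, hz⟩ hsurj
    obtain ⟨v, hv⟩ := hsurj (0, 1)
    rw [Lap] at hv
    have hv0 : v ⟨0, by omega⟩ = 0 := congrArg Prod.fst hv
    have hv2 := congrArg Prod.snd hv
    simp only at hv2
    have hsum : ∑ i : Fin n, dd n k x i * v i = 0 := by
      apply Finset.sum_eq_zero
      intro i _
      rcases le_or_gt (i : ℕ) 1 with h | h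
      · simp [dd, h]
      · have := hz i (by omega)
        simp [dd, this]
    rw [hsum, hv0, h0] at hv2
    simp at hv2
    nlinarith [hv2]

end aux2

section aux3
variable (n k : ℕ)

lemma hasFDeriv (hn : 3 ≤ n) (x : Fin n → ℝ) :
    HasFDerivAt (fun x : Fin n → ℝ =>
      ((x ⟨0, by omega⟩,
        (x ⟨1, by omega⟩) ^ 3 - 3 * x ⟨0, by omega⟩ * x ⟨1, by omega⟩ +
          ∑ i : Fin n, if (i : ℕ) ≤ 1 then 0
            else if (i : ℕ) ≤ k + 1 then -(x i) ^ 2 else (x i) ^ 2) : ℝ × ℝ))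
      (L n k hn x) x := by
  have p : ∀ i : Fin n, HasFDerivAt (fun x : Fin n → ℝ => x i) (pr n i) x := fun i =>
    (pr n i).hasFDerivAt
  have h3 : HasFDerivAt (fun x : Fin n → ℝ => (x ⟨1, by omega⟩) ^ 3)
      ((3 * (x ⟨1, by omega⟩) ^ 2) • pr n ⟨1, by omega⟩) x := by
    have := ((p ⟨1, by omega⟩).fun_mul (p ⟨1, by omega⟩)).fun_mul (p ⟨1, by omega⟩)
    have e : (fun x : Fin n → ℝ => x ⟨1, by omega⟩ * x ⟨1, by omega⟩ * x ⟨1, by omega⟩)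
        = fun x : Fin n → ℝ => (x ⟨1, by omega⟩) ^ 3 := by funext y; ring
    rw [e] at this
    refine this.congr_fderiv ?_
    ext v
    simp [smul_eq_mul]; ring
  have h01 : HasFDerivAt (fun x : Fin n → ℝ => 3 * x ⟨0, by omega⟩ * x ⟨1, by omega⟩)
      ((3:ℝ) • (x ⟨0, by omega⟩ • pr n ⟨1, by omega⟩
          + x ⟨1, by omega⟩ • pr n ⟨0, by omega⟩)) x := by
    have := ((p ⟨0, by omega⟩).fun_mul (p ⟨1, by omega⟩)).const_mul (3:ℝ)
    have e : (fun x : Fin n → ℝ => 3 * (x ⟨0, by omega⟩ * x ⟨1, by omega⟩))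
        = fun x : Fin n → ℝ => 3 * x ⟨0, by omega⟩ * x ⟨1, by omega⟩ := by funext y; ring
    rwa [e] at this
  have hsum : HasFDerivAt (fun x : Fin n → ℝ =>
      ∑ i : Fin n, if (i : ℕ) ≤ 1 then 0
        else if (i : ℕ) ≤ k + 1 then -(x i) ^ 2 else (x i) ^ 2)
      (∑ i : Fin n, dd n k x i • pr n i) x := by
    apply HasFDerivAt.fun_sum
    intro i _
    unfold dd
    split_ifs with h1 h2
    · simpa using hasFDerivAt_const (0:ℝ) x
    · have := ((p i).fun_mul (p i)).fun_neg
      have e : (fun x : Fin n → ℝ => -(x i * x i)) = fun x : Fin n → ℝ => -(x i)^2 := by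
        funext y; ring
      rw [e] at this
      convert this using 1
      ext v; simp [smul_eq_mul]; ring
    · have := (p i).fun_mul (p i)
      have e : (fun x : Fin n → ℝ => x i * x i) = fun x : Fin n → ℝ => (x i)^2 := by
        funext y; ring
      rw [e] at this
      refine this.congr_fderiv ?_
      ext v; simp [smul_eq_mul]; ring
  exact (p ⟨0, by omega⟩).prodMk ((h3.sub h01).add hsum)

end aux3

/-- The image under the index-`k` cusp map `c : ℝⁿ → ℝ²` of its critical set
equals the cuspidal cubic `{(s,u) : u² = 4s³}`, and the restriction of `c` to its critical
set is injective. -/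
theorem stmt11 (n k : ℕ) (hn : 3 ≤ n) (hk1 : 1 ≤ k) (hk2 : k ≤ n - 2)
    (c : (Fin n → ℝ) → ℝ × ℝ)
    (hc : ∀ x : Fin n → ℝ, c x =
      (x ⟨0, by omega⟩,
        (x ⟨1, by omega⟩) ^ 3 - 3 * x ⟨0, by omega⟩ * x ⟨1, by omega⟩ +
          ∑ i : Fin n, if (i : ℕ) ≤ 1 then 0
            else if (i : ℕ) ≤ k + 1 then -(x i) ^ 2 else (x i) ^ 2))
    (C : Set (Fin n → ℝ))
    (hC : C = {x : Fin n → ℝ | ¬ Function.Surjective (fderiv ℝ c x)}) :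
    c '' C = {p : ℝ × ℝ | p.2 ^ 2 = 4 * p.1 ^ 3} ∧ Set.InjOn c C := by
  have cfun : c = fun x : Fin n → ℝ =>
      ((x ⟨0, by omega⟩,
        (x ⟨1, by omega⟩) ^ 3 - 3 * x ⟨0, by omega⟩ * x ⟨1, by omega⟩ +
          ∑ i : Fin n, if (i : ℕ) ≤ 1 then 0
            else if (i : ℕ) ≤ k + 1 then -(x i) ^ 2 else (x i) ^ 2) : ℝ × ℝ) :=
    funext hc
  have hfd : ∀ x : Fin n → ℝ, fderiv ℝ c x = L n k hn x := by
    intro x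
    rw [cfun]
    exact (hasFDeriv n k hn x).fderiv
  have hCeq : C = {x : Fin n → ℝ |
      x ⟨0, by omega⟩ = (x ⟨1, by omega⟩) ^ 2 ∧ ∀ j : Fin n, 2 ≤ (j : ℕ) → x j = 0} := by
    rw [hC]
    ext x
    simp only [Set.mem_setOf_eq, hfd]
    exact surj_iff n k hn x
  -- value of c on the critical set
  have hval : ∀ x : Fin n → ℝ, x ∈ C →
      c x = ((x ⟨1, by omega⟩) ^ 2, -2 * (x ⟨1, by omega⟩) ^ 3) := by
    intro x hx
    rw [hCeq] at hx
    obtain ⟨h0, hz⟩ := hx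
    rw [hc x]
    have hsum : (∑ i : Fin n, if (i : ℕ) ≤ 1 then (0:ℝ)
        else if (i : ℕ) ≤ k + 1 then -(x i) ^ 2 else (x i) ^ 2) = 0 := by
      apply Finset.sum_eq_zero
      intro i _
      rcases le_or_gt (i : ℕ) 1 with h | h
      · simp [h]
      · have := hz i (by omega)
        simp [this, Nat.not_le.2 h]
    rw [hsum, h0]
    rw [Prod.mk.injEq]
    exact ⟨rfl, by ring⟩
  constructor
  · ext ⟨s, u⟩
    simp only [Set.mem_image, Set.mem_setOf_eq]
    constructor
    · rintro ⟨x, hx, hcx⟩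
      rw [hval x hx] at hcx
      have h1 : (x ⟨1, by omega⟩) ^ 2 = s := congrArg Prod.fst hcx
      have h2 : -2 * (x ⟨1, by omega⟩) ^ 3 = u := congrArg Prod.snd hcx
      rw [← h1, ← h2]
      ring
    · intro hu
      have hs : 0 ≤ s := by
        by_contra h
        push_neg at h
        nlinarith [sq_nonneg u, mul_pos (mul_pos (neg_pos.2 h) (neg_pos.2 h)) (neg_pos.2 h)]
      set t : ℝ := if u ≤ 0 then Real.sqrt s else -Real.sqrt s with htdef
      have ht2 : t ^ 2 = s := by
        rw [htdef]
        split_ifs <;> simp [Real.sq_sqrt hs]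
      have htu : -2 * t ^ 3 = u := by
        have hf : (u + 2 * t ^ 3) * (u - 2 * t ^ 3) = 0 := by
          have h6 : (2 * t ^ 3) ^ 2 = u ^ 2 := by
            rw [hu, ← ht2]; ring
          nlinarith [h6]
        rcases mul_eq_zero.1 hf with h | h
        · linarith
        · have hq : 0 ≤ Real.sqrt s ^ 3 := pow_nonneg (Real.sqrt_nonneg s) 3
          rw [htdef] at h ⊢
          split_ifs at h ⊢ with hle
          · linarith
          · push_neg at hle
            ring_nf at h ⊢
            linarith
      set x' : Fin n → ℝ := fun i => if (i : ℕ) = 0 then s else if (i : ℕ) = 1 then t else 0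
        with hx'def
      have hx0 : x' ⟨0, by omega⟩ = s := by simp [hx'def]
      have hx1 : x' ⟨1, by omega⟩ = t := by simp [hx'def]
      have hmem : x' ∈ C := by
        rw [hCeq]
        refine ⟨by rw [hx0, hx1, ht2], fun j hj => ?_⟩
        simp only [hx'def]
        rw [if_neg (by omega), if_neg (by omega)]
      refine ⟨x', hmem, ?_⟩
      rw [hval x' hmem, hx1, ht2, htu]
  · intro x hx y hy hxy
    rw [hval x hx, hval y hy] at hxy
    have h1 : (x ⟨1, by omega⟩) ^ 2 = (y ⟨1, by omega⟩) ^ 2 := congrArg Prod.fst hxy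
    have h2 : (x ⟨1, by omega⟩) ^ 3 = (y ⟨1, by omega⟩) ^ 3 := by
      have := congrArg Prod.snd hxy
      simp only at this
      linarith
    have hodd : Odd 3 := ⟨1, by norm_num⟩
    have ht : x ⟨1, by omega⟩ = y ⟨1, by omega⟩ :=
      (Odd.strictMono_pow (R := ℝ) (n := 3) hodd).injective h2
    rw [hCeq] at hx hy
    funext i
    rcases lt_or_ge (i : ℕ) 2 with h | h
    · interval_cases hi : (i : ℕ)
      · have e : i = ⟨0, by omega⟩ := Fin.ext hi
        rw [e, hx.1, hy.1, ht]
      · have e : i = ⟨1, by omega⟩ := Fin.ext hi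
        rw [e, ht]
    · rw [hx.2 i h, hy.2 i h]
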